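/- Let p ≥ 1 and let f : 𝕋 → ℝ be continuous on the circle 𝕋 = ℝ/ℤ with 0 ≤ f ≤ 1, and let n(y) denote the number (possibly infinite) of solutions x ∈ 𝕋 of f(x) = y. If ∫_0^1 (n(y))^{1/p} dy < ∞, then ω(f,t)_p ≤ t^{1/p} · ∫_0^1 (n(y))^{1/p} dy for all t ∈ (0,1]; in particular ω(f,t)_p = O(t^{1/p}). -/

import Mathlib

open MeasureTheory Set Classical
open scoped ENNReal NNReal

/-- The `L^p` modulus of continuity `ω(f,t)_p` on the circle `𝕋 = ℝ/ℤ`. -/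
noncomputable def modulus (f : AddCircle (1:ℝ) → ℝ) (p t : ℝ) : ℝ :=
  ⨆ h : {h : ℝ // |h| ≤ t},
    (∫ x : AddCircle (1:ℝ), |f (x + ((h.1 : ℝ) : AddCircle (1:ℝ))) - f x| ^ p) ^ (1/p)

private lemma arc_meas {h : ℝ} (h0 : 0 < h) (h1 : h ≤ 1) (w : AddCircle (1:ℝ)) :
    volume {x : AddCircle (1:ℝ) | ∃ s ∈ Ioo (0:ℝ) h, x = w - (s : AddCircle (1:ℝ))}
      ≤ ENNReal.ofReal h := by
  set S : Set (AddCircle (1:ℝ)) := ((↑) : ℝ → AddCircle (1:ℝ)) '' Ioo (-h) 0 with hS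
  have hSopen : IsOpen S := QuotientAddGroup.isOpenMap_coe _ isOpen_Ioo
  have hset : {x : AddCircle (1:ℝ) | ∃ s ∈ Ioo (0:ℝ) h, x = w - (s : AddCircle (1:ℝ))}
      = (fun x => x + (-w)) ⁻¹' S := by
    ext x
    simp only [mem_setOf_eq, mem_preimage, hS, mem_image]
    constructor
    · rintro ⟨s, hs, rfl⟩
      exact ⟨-s, ⟨by linarith [hs.2], by linarith [hs.1]⟩, by
        push_cast [AddCircle.coe_neg]
        abel⟩
    · rintro ⟨v, hv, hvx⟩
      refine ⟨-v, ⟨by linarith [hv.2], by linarith [hv.1]⟩, ?_⟩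
      have hx : x = (v : AddCircle (1:ℝ)) + w := by rw [hvx]; abel
      rw [hx]
      push_cast [AddCircle.coe_neg]
      abel
  rw [hset, measure_preimage_add_right]
  rw [AddCircle.add_projection_respects_measure (T := 1) (-1) hSopen.measurableSet]
  have hsub : QuotientAddGroup.mk ⁻¹' S ∩ Ioc (-1) (-1 + 1) ⊆ Ioo (-h) 0 := by
    rintro u ⟨hu1, hu2⟩
    simp only [hS, mem_preimage, mem_image] at hu1
    obtain ⟨v, hv, hveq⟩ := hu1
    have heq : ((u : ℝ) : AddCircle (1:ℝ)) = ((v : ℝ) : AddCircle (1:ℝ)) := hveq.symm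
    rw [QuotientAddGroup.eq_iff_sub_mem, AddSubgroup.mem_zmultiples_iff] at heq
    obtain ⟨k, hk⟩ := heq
    rw [zsmul_eq_mul, mul_one] at hk
    simp only [mem_Ioc, neg_add_cancel] at hu2
    simp only [mem_Ioo] at hv
    have hk0 : k = 0 := by
      have h1' : (k : ℝ) < 1 := by rw [hk]; linarith [hv.1, hu2.2]
      have h2' : (-1 : ℝ) < k := by rw [hk]; linarith [hv.2, hu2.1]
      have : k < 1 := by exact_mod_cast h1'
      have : (-1 : ℤ) < k := by exact_mod_cast h2'
      omega
    have huv : u = v := by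
      have : u - v = 0 := by rw [← hk, hk0]; simp
      linarith
    rw [huv]; exact ⟨hv.1, hv.2⟩
  calc volume (QuotientAddGroup.mk ⁻¹' S ∩ Ioc (-1) (-1 + 1))
      ≤ volume (Ioo (-h) 0) := measure_mono hsub
    _ = ENNReal.ofReal h := by rw [Real.volume_Ioo]; norm_num

private lemma cover_lem {f : AddCircle (1:ℝ) → ℝ} (hf : Continuous f) {h : ℝ} (h0 : 0 < h)
    {y : ℝ} {x : AddCircle (1:ℝ)}
    (hx : f x ⊓ f (x + (h : AddCircle (1:ℝ))) < y ∧ y < f x ⊔ f (x + (h : AddCircle (1:ℝ)))) :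
    ∃ w : AddCircle (1:ℝ), f w = y ∧ ∃ s ∈ Ioo (0:ℝ) h, x = w - (s : AddCircle (1:ℝ)) := by
  obtain ⟨x₀, rfl⟩ := QuotientAddGroup.mk_surjective x
  set F : ℝ → ℝ := fun u => f u with hF
  have hFc : Continuous F := hf.comp (AddCircle.continuous_mk' 1)
  have hadd : ((x₀ : AddCircle (1:ℝ)) + (h : AddCircle (1:ℝ))) = ((x₀ + h : ℝ) : AddCircle (1:ℝ)) := by
    rw [AddCircle.coe_add]
  rw [hadd] at hx
  have hle : x₀ ≤ x₀ + h := by linarith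
  have hz : ∃ z ∈ Ioo x₀ (x₀ + h), F z = y := by
    rcases le_total (F x₀) (F (x₀ + h)) with hc | hc
    · have hy : y ∈ Ioo (F x₀) (F (x₀ + h)) := by
        constructor
        · calc F x₀ = F x₀ ⊓ F (x₀ + h) := (inf_eq_left.2 hc).symm
            _ < y := hx.1
        · calc y < F x₀ ⊔ F (x₀ + h) := hx.2
            _ = F (x₀ + h) := sup_eq_right.2 hc
      obtain ⟨z, hz1, hz2⟩ := intermediate_value_Ioo hle hFc.continuousOn hy
      exact ⟨z, hz1, hz2⟩
    · have hy : y ∈ Ioo (F (x₀ + h)) (F x₀) := by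
        constructor
        · calc F (x₀ + h) = F x₀ ⊓ F (x₀ + h) := (inf_eq_right.2 hc).symm
            _ < y := hx.1
        · calc y < F x₀ ⊔ F (x₀ + h) := hx.2
            _ = F x₀ := sup_eq_left.2 hc
      obtain ⟨z, hz1, hz2⟩ := intermediate_value_Ioo' hle hFc.continuousOn hy
      exact ⟨z, hz1, hz2⟩
  obtain ⟨z, hz1, hz2⟩ := hz
  refine ⟨(z : AddCircle (1:ℝ)), hz2, z - x₀, ⟨by linarith [hz1.1], by linarith [hz1.2]⟩, ?_⟩
  rw [AddCircle.coe_sub]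
  abel


private lemma measB {f : AddCircle (1:ℝ) → ℝ} (hf : Continuous f) {h : ℝ} (h0 : 0 < h) (h1 : h ≤ 1)
    (y : ℝ) :
    volume {x : AddCircle (1:ℝ) | f x ⊓ f (x + (h : AddCircle (1:ℝ))) < y ∧
        y < f x ⊔ f (x + (h : AddCircle (1:ℝ)))}
      ≤ (if {x : AddCircle (1:ℝ) | f x = y}.Infinite then ⊤
          else ({x : AddCircle (1:ℝ) | f x = y}.ncard : ℝ≥0∞)) * ENNReal.ofReal h := by
  split_ifs with hinf
  · rw [ENNReal.top_mul (ENNReal.ofReal_pos.mpr h0).ne']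
    exact le_top
  · have hZfin : {x : AddCircle (1:ℝ) | f x = y}.Finite := Set.not_infinite.mp hinf
    set Z := {x : AddCircle (1:ℝ) | f x = y} with hZ
    have hcover : {x : AddCircle (1:ℝ) | f x ⊓ f (x + (h : AddCircle (1:ℝ))) < y ∧
        y < f x ⊔ f (x + (h : AddCircle (1:ℝ)))}
        ⊆ ⋃ w ∈ hZfin.toFinset, {x : AddCircle (1:ℝ) | ∃ s ∈ Ioo (0:ℝ) h, x = w - (s : AddCircle (1:ℝ))} := by
      intro x hx
      obtain ⟨w, hw, hws⟩ := cover_lem hf h0 hx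
      simp only [mem_iUnion, Set.Finite.mem_toFinset]
      exact ⟨w, hw, hws⟩
    calc volume _ ≤ volume (⋃ w ∈ hZfin.toFinset, {x : AddCircle (1:ℝ) | ∃ s ∈ Ioo (0:ℝ) h, x = w - (s : AddCircle (1:ℝ))}) := measure_mono hcover
      _ ≤ ∑ w ∈ hZfin.toFinset, volume {x : AddCircle (1:ℝ) | ∃ s ∈ Ioo (0:ℝ) h, x = w - (s : AddCircle (1:ℝ))} := measure_biUnion_finset_le _ _
      _ ≤ ∑ _w ∈ hZfin.toFinset, ENNReal.ofReal h := Finset.sum_le_sum fun w _ => arc_meas h0 h1 w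
      _ = (hZfin.toFinset.card : ℝ≥0∞) * ENNReal.ofReal h := by
          rw [Finset.sum_const, nsmul_eq_mul]
      _ = (Z.ncard : ℝ≥0∞) * ENNReal.ofReal h := by
          rw [Set.ncard_eq_toFinset_card _ hZfin]

private lemma key {p : ℝ} (hp : 1 ≤ p) {f : AddCircle (1:ℝ) → ℝ} (hf : Continuous f)
    (hf0 : ∀ x, 0 ≤ f x) (hf1 : ∀ x, f x ≤ 1) {h : ℝ} (h0 : 0 < h) (h1 : h ≤ 1) :
    (∫⁻ x : AddCircle (1:ℝ), ENNReal.ofReal |f (x + (h : AddCircle (1:ℝ))) - f x| ^ p) ^ (1/p)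
      ≤ ENNReal.ofReal h ^ (1/p) *
        ∫⁻ y in Ioo (0:ℝ) 1, (if {x : AddCircle (1:ℝ) | f x = y}.Infinite then (⊤:ℝ≥0∞)
          else ENNReal.ofReal ((({x : AddCircle (1:ℝ) | f x = y}.ncard : ℝ)) ^ (1/p))) := by
  have p0 : (0:ℝ) < p := lt_of_lt_of_le one_pos hp
  have hip : (0:ℝ) < 1/p := by positivity
  set c : AddCircle (1:ℝ) := ((h : ℝ) : AddCircle (1:ℝ)) with hc
  set F : AddCircle (1:ℝ) × ℝ → ℝ≥0∞ := fun q =>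
    if f q.1 ⊓ f (q.1 + c) < q.2 ∧ q.2 < f q.1 ⊔ f (q.1 + c) then 1 else 0 with hFdef
  set B : ℝ → Set (AddCircle (1:ℝ)) :=
    fun y => {x | f x ⊓ f (x + c) < y ∧ y < f x ⊔ f (x + c)} with hB
  have hcont1 : Continuous fun x : AddCircle (1:ℝ) => f x ⊓ f (x + c) :=
    hf.min (hf.comp (continuous_id.add continuous_const))
  have hcont2 : Continuous fun x : AddCircle (1:ℝ) => f x ⊔ f (x + c) :=
    hf.max (hf.comp (continuous_id.add continuous_const))
  have hUopen : IsOpen {q : AddCircle (1:ℝ) × ℝ |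
      f q.1 ⊓ f (q.1 + c) < q.2 ∧ q.2 < f q.1 ⊔ f (q.1 + c)} :=
    (isOpen_lt (hcont1.comp continuous_fst) continuous_snd).inter
      (isOpen_lt continuous_snd (hcont2.comp continuous_fst))
  have hFm : Measurable F := Measurable.ite hUopen.measurableSet measurable_const measurable_const
  have hBm : ∀ y, MeasurableSet (B y) := fun y =>
    ((isOpen_lt hcont1 continuous_const).inter (isOpen_lt continuous_const hcont2)).measurableSet
  set μ : Measure ℝ := volume.restrict (Ioo (0:ℝ) 1) with hμ
  set Φ : AddCircle (1:ℝ) → ℝ≥0∞ := fun x => ∫⁻ y, F (x, y) ∂μ with hΦdef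
  have hΦm : Measurable Φ := Measurable.lintegral_prod_right' hFm
  have habs : ∀ x : AddCircle (1:ℝ), |f (x + c) - f x| ≤ 1 := by
    intro x
    rw [abs_sub_le_iff]
    constructor
    · linarith [hf0 x, hf1 (x + c)]
    · linarith [hf0 (x + c), hf1 x]
  have hΦ : ∀ x, Φ x = ENNReal.ofReal |f (x + c) - f x| := by
    intro x
    have hsub : Ioo (f x ⊓ f (x + c)) (f x ⊔ f (x + c)) ⊆ Ioo (0:ℝ) 1 := by
      rintro y ⟨hy1, hy2⟩
      exact ⟨lt_of_le_of_lt (le_inf (hf0 x) (hf0 (x + c))) hy1,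
        lt_of_lt_of_le hy2 (sup_le (hf1 x) (hf1 (x + c)))⟩
    have hind : (fun y => F (x, y))
        = (Ioo (f x ⊓ f (x + c)) (f x ⊔ f (x + c))).indicator (fun _ => (1:ℝ≥0∞)) := by
      funext y
      rw [Set.indicator_apply]
      simp only [mem_Ioo]
      rfl
    show ∫⁻ y, F (x, y) ∂μ = _
    rw [hind, lintegral_indicator measurableSet_Ioo, setLIntegral_one, hμ,
      Measure.restrict_apply measurableSet_Ioo,
      Set.inter_eq_self_of_subset_left hsub, Real.volume_Ioo]
    congr 1
    exact max_sub_min_eq_abs _ _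
  have hΦle : ∀ x, Φ x ≤ 1 := fun x => by
    rw [hΦ x]; exact ENNReal.ofReal_le_one.mpr (habs x)
  set L : ℝ≥0∞ := ∫⁻ x : AddCircle (1:ℝ), ENNReal.ofReal |f (x + c) - f x| ^ p with hL
  have hLΦ : L = ∫⁻ x, Φ x ^ p := (lintegral_congr fun x => by rw [hΦ x]).symm
  have hLle : L ≤ 1 := by
    rw [hLΦ]
    calc ∫⁻ x, Φ x ^ p ≤ ∫⁻ _x : AddCircle (1:ℝ), 1 := lintegral_mono fun x => by
          calc Φ x ^ p ≤ 1 ^ p := ENNReal.rpow_le_rpow (hΦle x) p0.le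
            _ = 1 := ENNReal.one_rpow p
      _ = 1 := by rw [lintegral_one, AddCircle.measure_univ]; norm_num
  have hLtop : L ≠ ⊤ := (hLle.trans_lt ENNReal.one_lt_top).ne
  have hFB : ∀ y, (∫⁻ x, F (x, y)) = volume (B y) := by
    intro y
    have hind : (fun x => F (x, y)) = (B y).indicator (fun _ => (1:ℝ≥0∞)) := by
      funext x
      rw [Set.indicator_apply]
      simp only [hB, mem_setOf_eq]
      rfl
    rw [hind, lintegral_indicator (hBm y), setLIntegral_one]
  set M : ℝ≥0∞ := ∫⁻ y, (volume (B y)) ^ (1/p) ∂μ with hM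
  set I : ℝ≥0∞ := ∫⁻ y in Ioo (0:ℝ) 1, (if {x : AddCircle (1:ℝ) | f x = y}.Infinite then (⊤:ℝ≥0∞)
      else ENNReal.ofReal ((({x : AddCircle (1:ℝ) | f x = y}.ncard : ℝ)) ^ (1/p))) with hI
  have htail : M ≤ ENNReal.ofReal h ^ (1/p) * I := by
    have step1 : M ≤ ∫⁻ y, ((if {x : AddCircle (1:ℝ) | f x = y}.Infinite then (⊤:ℝ≥0∞)
        else ({x : AddCircle (1:ℝ) | f x = y}.ncard : ℝ≥0∞)) * ENNReal.ofReal h) ^ (1/p) ∂μ :=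
      lintegral_mono fun y => ENNReal.rpow_le_rpow (measB hf h0 h1 y) hip.le
    have step2 : ∀ y : ℝ, ((if {x : AddCircle (1:ℝ) | f x = y}.Infinite then (⊤:ℝ≥0∞)
        else ({x : AddCircle (1:ℝ) | f x = y}.ncard : ℝ≥0∞)) * ENNReal.ofReal h) ^ (1/p)
        = (if {x : AddCircle (1:ℝ) | f x = y}.Infinite then (⊤:ℝ≥0∞)
          else ENNReal.ofReal ((({x : AddCircle (1:ℝ) | f x = y}.ncard : ℝ)) ^ (1/p)))
            * ENNReal.ofReal h ^ (1/p) := by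
      intro y
      rw [ENNReal.mul_rpow_of_nonneg _ _ hip.le]
      congr 1
      split_ifs with hi
      · exact ENNReal.top_rpow_of_pos hip
      · rw [← ENNReal.ofReal_natCast, ENNReal.ofReal_rpow_of_nonneg (Nat.cast_nonneg _) hip.le]
    calc M ≤ _ := step1
      _ = ∫⁻ y, (if {x : AddCircle (1:ℝ) | f x = y}.Infinite then (⊤:ℝ≥0∞)
          else ENNReal.ofReal ((({x : AddCircle (1:ℝ) | f x = y}.ncard : ℝ)) ^ (1/p)))
            * ENNReal.ofReal h ^ (1/p) ∂μ := lintegral_congr step2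
      _ = I * ENNReal.ofReal h ^ (1/p) :=
          lintegral_mul_const' _ _ (ENNReal.rpow_ne_top_of_nonneg hip.le ENNReal.ofReal_ne_top)
      _ = ENNReal.ofReal h ^ (1/p) * I := mul_comm _ _
  have hmain : L ^ (1/p) ≤ M := by
    rcases eq_or_lt_of_le hp with hp1 | hp1
    · -- p = 1
      have e1 : (1:ℝ)/p = 1 := by rw [← hp1]; norm_num
      have ep : p = 1 := hp1.symm
      have hswap : (∫⁻ x : AddCircle (1:ℝ), Φ x) = ∫⁻ y, volume (B y) ∂μ := by
        rw [hΦdef, lintegral_lintegral_swap hFm.aemeasurable]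
        exact lintegral_congr fun y => hFB y
      rw [e1, ENNReal.rpow_one, hLΦ]
      refine le_of_eq ?_
      calc (∫⁻ x, Φ x ^ p) = ∫⁻ x, Φ x := lintegral_congr fun x => by rw [ep, ENNReal.rpow_one]
        _ = ∫⁻ y, volume (B y) ∂μ := hswap
        _ = M := (lintegral_congr fun y => by rw [e1, ENNReal.rpow_one]).symm
    · -- 1 < p
      set q := p / (p - 1) with hq
      have hpq : p.HolderConjugate q := Real.HolderConjugate.conjExponent hp1
      have hq0 : (0:ℝ) < q := hpq.symm.pos
      have hΦqtop : ∀ x, Φ x ^ (p - 1) ≠ ⊤ := fun x =>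
        ((ENNReal.rpow_le_one (hΦle x) (by linarith)).trans_lt ENNReal.one_lt_top).ne
      have hGm : Measurable fun q' : AddCircle (1:ℝ) × ℝ => Φ q'.1 ^ (p - 1) * F q' :=
        ((ENNReal.continuous_rpow_const.measurable).comp (hΦm.comp measurable_fst)).mul hFm
      have hkey : L ≤ L ^ (1/q) * M := by
        have h1 : ∀ x, Φ x ^ p = ∫⁻ y, Φ x ^ (p - 1) * F (x, y) ∂μ := by
          intro x
          rw [lintegral_const_mul' _ _ (hΦqtop x)]
          have : Φ x ^ p = Φ x ^ (p - 1) * Φ x ^ (1:ℝ) := by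
            rw [← ENNReal.rpow_add_of_nonneg _ _ (by linarith) zero_le_one, sub_add_cancel]
          rw [this, ENNReal.rpow_one]
        have h2 : ∀ y, (∫⁻ x, Φ x ^ (p - 1) * F (x, y))
            ≤ L ^ (1/q) * (volume (B y)) ^ (1/p) := by
          intro y
          have hold := ENNReal.lintegral_mul_le_Lp_mul_Lq (μ := volume)
            (f := fun x : AddCircle (1:ℝ) => Φ x ^ (p - 1)) (g := fun x => F (x, y)) hpq.symm
            ((ENNReal.continuous_rpow_const.measurable).comp hΦm).aemeasurable
            (hFm.comp (measurable_prodMk_right)).aemeasurable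
          simp only [Pi.mul_apply] at hold
          calc (∫⁻ x, Φ x ^ (p - 1) * F (x, y)) ≤
              (∫⁻ x, (Φ x ^ (p - 1)) ^ q) ^ (1/q) * (∫⁻ x, F (x, y) ^ p) ^ (1/p) := hold
            _ = L ^ (1/q) * (volume (B y)) ^ (1/p) := by
                congr 1
                · congr 1
                  rw [hLΦ]
                  exact lintegral_congr fun x => by
                    rw [← ENNReal.rpow_mul, hpq.sub_one_mul_conj]
                · congr 1
                  rw [← hFB y]
                  refine lintegral_congr fun x => ?_
                  show (if f x ⊓ f (x + c) < y ∧ y < f x ⊔ f (x + c) then (1:ℝ≥0∞) else 0) ^ p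
                    = (if f x ⊓ f (x + c) < y ∧ y < f x ⊔ f (x + c) then (1:ℝ≥0∞) else 0)
                  split_ifs
                  · exact ENNReal.one_rpow p
                  · exact ENNReal.zero_rpow_of_pos p0
        calc L = ∫⁻ x, Φ x ^ p := hLΦ
          _ = ∫⁻ x, ∫⁻ y, Φ x ^ (p - 1) * F (x, y) ∂μ := lintegral_congr h1
          _ = ∫⁻ y, (∫⁻ x, Φ x ^ (p - 1) * F (x, y)) ∂μ := lintegral_lintegral_swap hGm.aemeasurable
          _ ≤ ∫⁻ y, L ^ (1/q) * (volume (B y)) ^ (1/p) ∂μ := lintegral_mono h2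
          _ = L ^ (1/q) * M :=
              lintegral_const_mul' _ _
                (ENNReal.rpow_ne_top_of_nonneg (one_div_nonneg.mpr hq0.le) hLtop)
      by_cases hL0 : L = 0
      · rw [hL0, ENNReal.zero_rpow_of_pos hip]
        exact zero_le
      · have hq0' : L ^ (1/q) ≠ 0 := by
          simp only [ne_eq, ENNReal.rpow_eq_zero_iff, not_or]
          constructor
          · exact fun hcon => hL0 hcon.1
          · exact fun hcon => hLtop hcon.1
        have hqt : L ^ (1/q) ≠ ⊤ :=
          ENNReal.rpow_ne_top_of_nonneg (one_div_nonneg.mpr hq0.le) hLtop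
        have hsplit : L ^ (1/p) * L ^ (1/q) = L := by
          rw [← ENNReal.rpow_add _ _ hL0 hLtop]
          rw [show (1:ℝ)/p + 1/q = 1 by
            rw [one_div, one_div]; exact hpq.inv_add_inv_eq_one]
          exact ENNReal.rpow_one L
        rw [← ENNReal.mul_le_mul_iff_left hq0' hqt, hsplit]
        calc L ≤ L ^ (1/q) * M := hkey
          _ = M * L ^ (1/q) := mul_comm _ _
  exact hmain.trans htail

/-- Let `p ≥ 1`, `f` continuous on the circle with `0 ≤ f ≤ 1`, and let
`n(y)` be the Banach indicatrix. If `∫₀¹ n(y)^{1/p} dy < ∞`, then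
`ω(f,t)_p ≤ t^{1/p} · ∫₀¹ n(y)^{1/p} dy` for all `t ∈ (0,1]`. -/
theorem stmt_4 (p : ℝ) (hp : 1 ≤ p) (f : AddCircle (1:ℝ) → ℝ) (hf : Continuous f)
    (hf0 : ∀ x, 0 ≤ f x) (hf1 : ∀ x, f x ≤ 1)
    (hint : ∫⁻ y in Set.Ioo (0:ℝ) 1,
      (if {x : AddCircle (1:ℝ) | f x = y}.Infinite then ⊤
       else ENNReal.ofReal ((({x : AddCircle (1:ℝ) | f x = y}.ncard : ℝ)) ^ (1/p))) < ⊤) :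
    (∀ t ∈ Set.Ioc (0:ℝ) 1,
      modulus f p t ≤ t ^ (1/p) *
        (∫⁻ y in Set.Ioo (0:ℝ) 1,
          (if {x : AddCircle (1:ℝ) | f x = y}.Infinite then ⊤
           else ENNReal.ofReal ((({x : AddCircle (1:ℝ) | f x = y}.ncard : ℝ)) ^ (1/p)))).toReal) ∧
    ∃ C > 0, ∀ t ∈ Set.Ioc (0:ℝ) 1, modulus f p t ≤ C * t ^ (1/p) := by
  have p0 : (0:ℝ) < p := lt_of_lt_of_le one_pos hp
  have hip : (0:ℝ) < 1/p := by positivity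
  set I : ℝ≥0∞ := ∫⁻ y in Set.Ioo (0:ℝ) 1,
      (if {x : AddCircle (1:ℝ) | f x = y}.Infinite then ⊤
       else ENNReal.ofReal ((({x : AddCircle (1:ℝ) | f x = y}.ncard : ℝ)) ^ (1/p))) with hI
  have hIne : I ≠ ⊤ := hint.ne
  -- lintegral L as a function of the shift
  set L : ℝ → ℝ≥0∞ := fun e =>
    ∫⁻ x : AddCircle (1:ℝ), ENNReal.ofReal |f (x + (e : AddCircle (1:ℝ))) - f x| ^ p with hLdef
  have hLneg : ∀ e : ℝ, L e = L (-e) := by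
    intro e
    have := (lintegral_add_right_eq_self
      (μ := (volume : Measure (AddCircle (1:ℝ))))
      (fun x => ENNReal.ofReal |f (x + (e : AddCircle (1:ℝ))) - f x| ^ p)
      ((-e : ℝ) : AddCircle (1:ℝ))).symm
    rw [hLdef]
    simp only []
    rw [this]
    refine lintegral_congr fun x => ?_
    have h1 : x + ((-e : ℝ) : AddCircle (1:ℝ)) + ((e:ℝ) : AddCircle (1:ℝ)) = x := by
      rw [add_assoc, ← AddCircle.coe_add]
      norm_num
    rw [h1, abs_sub_comm]
  -- the real term equals toReal of L
  have hterm : ∀ e : ℝ,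
      (∫ x : AddCircle (1:ℝ), |f (x + ((e : ℝ) : AddCircle (1:ℝ))) - f x| ^ p)
        = (L e).toReal := by
    intro e
    have hsm : AEStronglyMeasurable
        (fun x : AddCircle (1:ℝ) => |f (x + ((e : ℝ) : AddCircle (1:ℝ))) - f x| ^ p) volume := by
      have hcont : Continuous fun x : AddCircle (1:ℝ) =>
          |f (x + ((e : ℝ) : AddCircle (1:ℝ))) - f x| ^ p := by
        apply Continuous.rpow_const
        · exact ((hf.comp (continuous_id.add continuous_const)).sub hf).abs
        · exact fun x => Or.inr p0.le
      exact hcont.aestronglyMeasurable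
    rw [integral_eq_lintegral_of_nonneg_ae
      (Filter.Eventually.of_forall fun x => Real.rpow_nonneg (abs_nonneg _) p) hsm]
    congr 1
    refine lintegral_congr fun x => ?_
    rw [← ENNReal.ofReal_rpow_of_nonneg (abs_nonneg _) p0.le]
  have main : ∀ t ∈ Set.Ioc (0:ℝ) 1, modulus f p t ≤ t ^ (1/p) * I.toReal := by
    rintro t ⟨ht0, ht1⟩
    have hne : Nonempty {h : ℝ // |h| ≤ t} := ⟨⟨0, by simp [ht0.le]⟩⟩
    have hRHS0 : 0 ≤ t ^ (1/p) * I.toReal :=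
      mul_nonneg (Real.rpow_nonneg ht0.le _) ENNReal.toReal_nonneg
    rw [modulus]
    apply ciSup_le
    rintro ⟨h, hh⟩
    simp only []
    by_cases hzero : h = 0
    · subst hzero
      have : ∀ x : AddCircle (1:ℝ), |f (x + ((0:ℝ) : AddCircle (1:ℝ))) - f x| ^ p = 0 := by
        intro x
        have : x + ((0:ℝ) : AddCircle (1:ℝ)) = x := by norm_num
        rw [this, sub_self, abs_zero, Real.zero_rpow p0.ne']
      rw [integral_congr_ae (Filter.Eventually.of_forall this), integral_zero,
        Real.zero_rpow (by positivity : (1:ℝ)/p ≠ 0)]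
      exact hRHS0
    · -- |h| ∈ (0, t]
      have habs0 : 0 < |h| := abs_pos.mpr hzero
      have habst : |h| ≤ t := hh
      have hL : L h = L |h| := by
        rcases abs_cases h with ⟨he, _⟩ | ⟨he, _⟩
        · rw [he]
        · rw [he, ← hLneg]
      have hkey := key hp hf hf0 hf1 habs0 (le_trans habst ht1)
      have hmono : ENNReal.ofReal |h| ^ (1/p) * I ≤ ENNReal.ofReal t ^ (1/p) * I :=
        mul_le_mul_left (ENNReal.rpow_le_rpow (ENNReal.ofReal_le_ofReal habst) hip.le) I
      have hch : (L h) ^ (1/p) ≤ ENNReal.ofReal t ^ (1/p) * I := by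
        rw [hL]
        exact le_trans hkey hmono
      have hfin : ENNReal.ofReal t ^ (1/p) * I ≠ ⊤ :=
        ENNReal.mul_ne_top (ENNReal.rpow_ne_top_of_nonneg hip.le ENNReal.ofReal_ne_top) hIne
      calc (∫ x : AddCircle (1:ℝ), |f (x + ((h : ℝ) : AddCircle (1:ℝ))) - f x| ^ p) ^ (1/p)
          = ((L h).toReal) ^ (1/p) := by rw [hterm h]
        _ = ((L h) ^ (1/p)).toReal := ENNReal.toReal_rpow _ _
        _ ≤ (ENNReal.ofReal t ^ (1/p) * I).toReal := ENNReal.toReal_mono hfin hch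
        _ = t ^ (1/p) * I.toReal := by
            rw [ENNReal.toReal_mul, ENNReal.ofReal_rpow_of_nonneg ht0.le hip.le,
              ENNReal.toReal_ofReal (Real.rpow_nonneg ht0.le _)]
  refine ⟨main, I.toReal + 1, by positivity, fun t ht => (main t ht).trans ?_⟩
  have h1 : (0:ℝ) ≤ t ^ (1/p) := Real.rpow_nonneg ht.1.le _
  have h2 : (0:ℝ) ≤ I.toReal := ENNReal.toReal_nonneg
  nlinarith
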